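/- Let F ⊆ Y^X be a nonempty class of functions. NFL holds for the uniform distribution u_F if and only if F is closed under permutation (c.u.p.). -/

import Mathlib

namespace NFL

/-- A (deterministic) optimiser on search space `Fin n` and range `Y`:
it assigns to every trace (list of pairs with pairwise distinct first
components) of length `< n` a next, unvisited search point. -/
structure Optimiser (n : ℕ) (Y : Type*) where
  next : List (Fin n × Y) → Fin n
  valid : ∀ T : List (Fin n × Y), T.length < n → (T.map Prod.fst).Nodup →
    next T ∉ T.map Prod.fst

variable {n : ℕ} {Y : Type*}

/-- The trace generated after `k` steps by running optimiser `a`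
on target function `f`, starting from the empty trace. -/
def runFrom (a : Optimiser n Y) (f : Fin n → Y) : ℕ → List (Fin n × Y)
  | 0 => []
  | k + 1 =>
      runFrom a f k ++ [(a.next (runFrom a f k), f (a.next (runFrom a f k)))]

/-- The result vector `T^y(a,f)`: its `i`-th entry (0-indexed) is the value
observed at step `i+1`, i.e. `f` applied to the point probed after `i` steps. -/
def resVec (a : Optimiser n Y) (f : Fin n → Y) (i : Fin n) : Y :=
  f (a.next (runFrom a f (i : ℕ)))

/-- A problem distribution: a probability distribution on `Y^X`. -/
def IsProbDist [Fintype Y] (P : (Fin n → Y) → ℝ) : Prop :=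
  (∀ f, 0 ≤ P f) ∧ ∑ f, P f = 1

/-- `P_a(R)`: the probability that optimiser `a` produces result vector `R`. -/
def resProb [Fintype Y] [DecidableEq Y] (P : (Fin n → Y) → ℝ)
    (a : Optimiser n Y) (R : Fin n → Y) : ℝ :=
  ∑ f ∈ Finset.univ.filter (fun f => resVec a f = R), P f

/-- Expected performance `M^P(a)` of optimiser `a` under distribution `P`
and performance measure `M`. -/
def perf [Fintype Y] (P : (Fin n → Y) → ℝ) (M : (Fin n → Y) → ℝ)
    (a : Optimiser n Y) : ℝ :=
  ∑ f, P f * M (resVec a f)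

/-- NFL holds for `P`: all optimisers have the same expected performance
under every (nonnegative) performance measure. -/
def NFLholds [Fintype Y] (P : (Fin n → Y) → ℝ) : Prop :=
  ∀ M : (Fin n → Y) → ℝ, (∀ R, 0 ≤ M R) →
    ∀ a b : Optimiser n Y, perf P M a = perf P M b

/-- The histogram of `f`: `h_f(y) = |f⁻¹(y)|`. -/
def histogram [DecidableEq Y] (f : Fin n → Y) (y : Y) : ℕ :=
  (Finset.univ.filter fun x => f x = y).card

/-- `P` is block uniform: functions with equal histograms get equal probability. -/
def BlockUniform [DecidableEq Y] (P : (Fin n → Y) → ℝ) : Prop :=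
  ∀ f g : Fin n → Y, histogram f = histogram g → P f = P g

/-- `F` is closed under permutation: `f ∈ F` implies `σf ∈ F`,
where `(σf)(x) = f(σ⁻¹(x))`. -/
def Cup [Fintype Y] [DecidableEq Y] (F : Finset (Fin n → Y)) : Prop :=
  ∀ f ∈ F, ∀ σ : Equiv.Perm (Fin n), (f ∘ σ.symm) ∈ F

/-- The uniform distribution on a class `F`. -/
noncomputable def uniformOn [Fintype Y] [DecidableEq Y] (F : Finset (Fin n → Y))
    (f : Fin n → Y) : ℝ :=
  if f ∈ F then 1 / F.card else 0

/-- An optimiser is non-adaptive if it probes the points of `X` in a fixed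
order, regardless of the observed values. -/
def NonAdaptive (a : Optimiser n Y) : Prop :=
  ∃ ord : Fin n → Fin n,
    ∀ (f : Fin n → Y) (i : Fin n), a.next (runFrom a f (i : ℕ)) = ord i

/-- Optimisation time `M_ptm(R)`: the least index `i` (counting from 1) with
`R[i] = yMax`, with the convention `M_ptm(R) = n` if no such index exists. -/
def mptm [DecidableEq Y] (yMax : Y) (R : Fin n → Y) : ℕ :=
  if h : ∃ i, R i = yMax then
    ((Finset.univ.filter fun i => R i = yMax).min'
      ⟨h.choose, Finset.mem_filter.mpr ⟨Finset.mem_univ _, h.choose_spec⟩⟩).val + 1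
  else n

/-- probe point after k steps -/
def probe (a : Optimiser n Y) (f : Fin n → Y) (k : ℕ) : Fin n :=
  a.next (runFrom a f k)

lemma runFrom_length (a : Optimiser n Y) (f : Fin n → Y) (k : ℕ) :
    (runFrom a f k).length = k := by
  induction k with
  | zero => rfl
  | succ k ih => simp [runFrom, ih]

lemma runFrom_nodup (a : Optimiser n Y) (f : Fin n → Y) :
    ∀ k, k ≤ n → ((runFrom a f k).map Prod.fst).Nodup := by
  intro k
  induction k with
  | zero => intro _; simp [runFrom]
  | succ k ih =>
    intro hk
    have hk' : k ≤ n := Nat.le_of_succ_le hk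
    have hnd := ih hk'
    have hlen : (runFrom a f k).length < n := by rw [runFrom_length]; omega
    have hnot := a.valid _ hlen hnd
    simp only [runFrom, List.map_append, List.map_cons, List.map_nil]
    rw [List.nodup_append]
    exact ⟨hnd, List.nodup_singleton _, by
      simp
      intro a_1 x h he
      subst he
      exact hnot (List.mem_map.mpr ⟨_, h, rfl⟩)⟩

lemma probe_mem (a : Optimiser n Y) (f : Fin n → Y) :
    ∀ {i k : ℕ}, i < k → probe a f i ∈ (runFrom a f k).map Prod.fst := by
  intro i k
  induction k with
  | zero => omega
  | succ k ih =>
    intro hik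
    simp only [runFrom, List.map_append, List.mem_append]
    rcases Nat.lt_or_ge i k with h | h
    · exact Or.inl (ih h)
    · have : i = k := by omega
      subst this
      right; simp [probe]

lemma probe_not_mem (a : Optimiser n Y) (f : Fin n → Y) {k : ℕ} (hk : k < n) :
    probe a f k ∉ (runFrom a f k).map Prod.fst :=
  a.valid _ (by rw [runFrom_length]; exact hk) (runFrom_nodup a f k hk.le)

lemma probe_inj (a : Optimiser n Y) (f : Fin n → Y) {i j : ℕ}
    (hi : i < n) (hj : j < n) (h : probe a f i = probe a f j) : i = j := by
  by_contra hne
  wlog hij : i < j generalizing i j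
  · exact this hj hi h.symm (Ne.symm hne) (by omega)
  exact probe_not_mem a f hj (h ▸ probe_mem a f hij)

noncomputable def probeEquiv (a : Optimiser n Y) (f : Fin n → Y) : Fin n ≃ Fin n :=
  Equiv.ofBijective (fun i => probe a f i)
    ((Finite.injective_iff_bijective).mp
      (fun i j h => Fin.ext (probe_inj a f i.isLt j.isLt h)))

lemma resVec_eq (a : Optimiser n Y) (f : Fin n → Y) (i : Fin n) :
    resVec a f i = f (probeEquiv a f i) := rfl

lemma resVec_injective (a : Optimiser n Y) [Fintype Y] :
    Function.Injective (resVec a : (Fin n → Y) → (Fin n → Y)) := by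
  intro f g h
  have hrun : ∀ k, k ≤ n → runFrom a f k = runFrom a g k := by
    intro k
    induction k with
    | zero => intro _; rfl
    | succ k ih =>
      intro hk
      have hk' : k < n := hk
      have hr := ih hk'.le
      have hval : f (probe a f k) = g (probe a g k) := by
        have := congrFun h ⟨k, hk'⟩
        simpa [resVec, probe] using this
      simp only [runFrom, hr, probe] at hval ⊢
      rw [hval]
  funext x
  obtain ⟨i, hi⟩ := (probeEquiv a f).surjective x
  have hpeq : probe a g i = probe a f i := by
    simp [probe, hrun i i.isLt.le]
  have h1 : f (probe a f i) = resVec a f i := rfl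
  have h2 : g (probe a g i) = resVec a g i := rfl
  have : f (probe a f i) = g (probe a f i) := by
    rw [h1, h, ← h2, hpeq]
  simpa [probeEquiv, Equiv.ofBijective] using hi ▸ this

lemma resVec_surjective (a : Optimiser n Y) [Fintype Y] :
    Function.Surjective (resVec a : (Fin n → Y) → (Fin n → Y)) :=
  Finite.surjective_of_injective (resVec_injective a)

lemma histogram_comp_equiv [DecidableEq Y] (f : Fin n → Y) (e : Fin n ≃ Fin n) :
    histogram (f ∘ e) = histogram f := by
  funext y
  unfold histogram
  apply Finset.card_bij (fun i _ => e i)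
  · intro i hi; simp_all
  · intro i _ j _ hij; exact e.injective hij
  · intro x hx; exact ⟨e.symm x, by simp_all, by simp⟩

lemma histogram_resVec [DecidableEq Y] (a : Optimiser n Y) (f : Fin n → Y) :
    histogram (resVec a f) = histogram f := by
  have : resVec a f = f ∘ (probeEquiv a f) := funext fun i => resVec_eq a f i
  rw [this, histogram_comp_equiv]

lemma exists_perm_of_histogram_eq [DecidableEq Y] {f g : Fin n → Y}
    (h : histogram f = histogram g) : ∃ σ : Equiv.Perm (Fin n), f = g ∘ σ := by
  have hcard : ∀ y : Y, Fintype.card {x // f x = y} = Fintype.card {x // g x = y} := by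
    intro y
    rw [Fintype.card_subtype, Fintype.card_subtype]
    exact congrFun h y
  have e : ∀ y : Y, {x // f x = y} ≃ {x // g x = y} :=
    fun y => Fintype.equivOfCardEq (hcard y)
  refine ⟨Equiv.ofFiberEquiv e, funext fun x => ?_⟩
  exact (Equiv.ofFiberEquiv_map e x).symm


/-- sequential optimiser following order `ord` -/
def seqOpt (hn : 0 < n) (ord : Equiv.Perm (Fin n)) : Optimiser n Y where
  next T :=
    if hS : (Finset.univ.filter fun k : Fin n => ord k ∉ T.map Prod.fst).Nonempty
    then ord ((Finset.univ.filter fun k : Fin n => ord k ∉ T.map Prod.fst).min' hS)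
    else ⟨0, hn⟩
  valid := by
    intro T hT _
    have hS : (Finset.univ.filter fun k : Fin n => ord k ∉ T.map Prod.fst).Nonempty := by
      by_contra hempty
      rw [Finset.not_nonempty_iff_eq_empty, Finset.filter_eq_empty_iff] at hempty
      push_neg at hempty
      have hsub : Finset.univ.image (fun k : Fin n => ord k) ⊆ (T.map Prod.fst).toFinset := by
        intro x hx
        obtain ⟨k, hk, rfl⟩ := Finset.mem_image.mp hx
        exact List.mem_toFinset.mpr (hempty hk)
      have h1 : (Finset.univ.image (fun k : Fin n => ord k)).card = n := by
        rw [Finset.card_image_of_injective _ ord.injective, Finset.card_univ, Fintype.card_fin]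
      have h2 := Finset.card_le_card hsub
      have h3 : (T.map Prod.fst).toFinset.card ≤ (T.map Prod.fst).length :=
        List.toFinset_card_le _
      simp only [List.length_map] at h3
      omega
    beta_reduce
    rw [dif_pos hS]
    exact (Finset.mem_filter.mp ((Finset.univ.filter fun k : Fin n =>
      ord k ∉ T.map Prod.fst).min'_mem hS)).2

lemma seqOpt_next_eq (hn : 0 < n) (ord : Equiv.Perm (Fin n)) (T : List (Fin n × Y))
    {k : ℕ} (hk : k < n)
    (hmem : ∀ x : Fin n, x ∈ T.map Prod.fst ↔ (ord.symm x : ℕ) < k) :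
    (seqOpt hn ord).next T = ord ⟨k, hk⟩ := by
  have hS : (Finset.univ.filter fun j : Fin n => ord j ∉ T.map Prod.fst).Nonempty :=
    ⟨⟨k, hk⟩, by simp [hmem]⟩
  dsimp only [seqOpt]
  rw [dif_pos hS]
  congr 1
  apply le_antisymm
  · exact Finset.min'_le _ _ (by simp [hmem])
  · have hmin := Finset.min'_mem _ hS
    rw [Finset.mem_filter] at hmin
    have h2 := hmin.2
    rw [hmem] at h2
    simp only [Equiv.symm_apply_apply, not_lt] at h2
    rw [Fin.le_def]
    exact h2

lemma seqOpt_run_mem (hn : 0 < n) (ord : Equiv.Perm (Fin n)) (f : Fin n → Y) :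
    ∀ k : ℕ, k ≤ n →
      ∀ x : Fin n, x ∈ (runFrom (seqOpt hn ord) f k).map Prod.fst ↔ (ord.symm x : ℕ) < k := by
  intro k
  induction k with
  | zero => intro _ x; simp [runFrom]
  | succ k ih =>
    intro hk x
    have hk' : k < n := hk
    have ihmem := ih hk'.le
    have hnext := seqOpt_next_eq hn ord _ hk' ihmem
    simp only [runFrom, List.map_append, List.mem_append, List.map_cons, List.map_nil,
      List.mem_singleton, hnext, ihmem]
    constructor
    · rintro (h | h)
      · omega
      · subst h; simp
    · intro h
      rcases Nat.lt_or_ge (ord.symm x : ℕ) k with h' | h'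
      · exact Or.inl h'
      · right
        have hkk : (ord.symm x : ℕ) = k := by omega
        have hxx : ord.symm x = ⟨k, hk'⟩ := Fin.ext hkk
        rw [← hxx, Equiv.apply_symm_apply]

lemma seqOpt_resVec (hn : 0 < n) (ord : Equiv.Perm (Fin n)) (f : Fin n → Y) (i : Fin n) :
    resVec (seqOpt hn ord) f i = f (ord i) := by
  have h := seqOpt_next_eq hn ord (runFrom (seqOpt hn ord) f (i : ℕ)) i.isLt
    (seqOpt_run_mem hn ord f i i.isLt.le)
  simp only [resVec, h]


theorem nfl_uniformOn_iff_cup {n : ℕ} {Y : Type*} [Fintype Y] [DecidableEq Y]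
    (hn : 1 ≤ n) (hY : 2 ≤ Fintype.card Y)
    (F : Finset (Fin n → Y)) (hF : F.Nonempty) :
    NFLholds (uniformOn F) ↔ Cup F := by
  have hn0 : 0 < n := hn
  constructor
  · -- NFL → Cup
    intro hNFL f hf σ
    by_contra hnot
    set M : (Fin n → Y) → ℝ := fun R => if R = f then 1 else 0 with hM
    have hMnn : ∀ R, 0 ≤ M R := fun R => by
      simp only [hM]; split <;> norm_num
    have h := hNFL M hMnn (seqOpt hn0 1) (seqOpt hn0 σ)
    have ha : ∀ g : Fin n → Y, resVec (seqOpt hn0 1) g = g := by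
      intro g; funext i; rw [seqOpt_resVec]; rfl
    have hb : ∀ g : Fin n → Y, resVec (seqOpt hn0 σ) g = fun i => g (σ i) := by
      intro g; funext i; rw [seqOpt_resVec]
    have hpa : perf (uniformOn F) M (seqOpt hn0 1) = 1 / F.card := by
      unfold perf
      rw [Finset.sum_eq_single f]
      · simp [ha, hM, uniformOn, hf]
      · intro g _ hg
        simp [ha, hM, hg]
      · intro hfu; exact absurd (Finset.mem_univ f) hfu
    have hpb : perf (uniformOn F) M (seqOpt hn0 σ) = 0 := by
      unfold perf
      apply Finset.sum_eq_zero
      intro g _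
      rw [hb]
      by_cases hgf : (fun i => g (σ i)) = f
      · have hgs : g = f ∘ ⇑σ.symm := by
          funext x
          have := congrFun hgf (σ.symm x)
          simpa using this
        rw [hgs]
        simp [uniformOn, hnot]
      · simp [hM, hgf]
    rw [hpa, hpb] at h
    have hc : (0:ℝ) < (F.card : ℝ) := by
      exact_mod_cast Finset.card_pos.mpr hF
    exact (one_div_ne_zero (ne_of_gt hc)) h
  · -- Cup → NFL
    intro hcup M hMnn a b
    have key : ∀ c : Optimiser n Y, perf (uniformOn F) M c
        = (1 / (F.card : ℝ)) * ∑ R ∈ F.image (fun g => resVec c g), M R := by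
      intro c
      unfold perf
      rw [Finset.sum_image (fun x _ y _ h => resVec_injective c h), Finset.mul_sum]
      rw [← Finset.sum_subset (Finset.subset_univ F)
        (fun g _ hg => by simp [uniformOn, hg])]
      exact Finset.sum_congr rfl (fun g hg => by simp [uniformOn, hg])
    have himg : ∀ c d : Optimiser n Y,
        F.image (fun g => resVec c g) ⊆ F.image (fun g => resVec d g) := by
      intro c d R hR
      obtain ⟨g, hg, rfl⟩ := Finset.mem_image.mp hR
      obtain ⟨g', hg'⟩ := resVec_surjective d (resVec c g)
      have hhist : histogram g' = histogram g := by
        rw [← histogram_resVec d g', hg', histogram_resVec]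
      obtain ⟨σ, hσ⟩ := exists_perm_of_histogram_eq hhist
      have hmem : g' ∈ F := by
        rw [hσ]
        have := hcup g hg σ.symm
        simpa using this
      exact Finset.mem_image.mpr ⟨g', hmem, hg'⟩
    rw [key a, key b,
      Finset.Subset.antisymm (himg a b) (himg b a)]
end NFL
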